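/- (Positive bias of the LR estimator in a homogeneous market.) Let λ > 0 and 0 ≤ φ < φ̃. For any a ∈ (0,1), define the limiting LR estimator value E_LR(a) = exp(−λ·φ·F(a·φ̃ + (1−a)·φ)) − exp(−λ·φ̃·F(a·φ̃ + (1−a)·φ)) and the limiting GTE = exp(−λ·φ·F(φ)) − exp(−λ·φ̃·F(φ̃)). Then E_LR(a) > GTE for all a ∈ (0,1). -/
import Mathlib


noncomputable def F : ℝ → ℝ := fun x => if x = 0 then 1 else (1 - Real.exp (-x)) / x

lemma F_lt_one {y : ℝ} (hy : 0 < y) : F y < 1 := by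
  have h := Real.add_one_lt_exp (x := -y) (by linarith)
  simp only [F, hy.ne', if_false]
  rw [div_lt_one hy]
  linarith

lemma F_anti : StrictAntiOn F (Set.Ioi (0:ℝ)) := by
  have heq : Set.EqOn F (fun x => (1 - Real.exp (-x)) / x) (Set.Ioi 0) := by
    intro x hx
    simp [F, (show x ≠ 0 from ne_of_gt hx)]
  apply strictAntiOn_of_deriv_neg (convex_Ioi 0)
  · apply ContinuousOn.congr _ heq
    apply ContinuousOn.div
    · fun_prop
    · fun_prop
    · intro x hx; exact ne_of_gt hx
  · intro x hx
    rw [interior_Ioi] at hx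
    have hx0 : (0:ℝ) < x := hx
    have hd : HasDerivAt (fun x => (1 - Real.exp (-x)) / x)
        ((Real.exp (-x) * x - (1 - Real.exp (-x)) * 1) / x ^ 2) x := by
      have h1 : HasDerivAt (fun x : ℝ => 1 - Real.exp (-x)) (Real.exp (-x)) x := by
        have := ((Real.hasDerivAt_exp (-x)).comp x (hasDerivAt_neg x)).const_sub 1
        simpa using this
      exact h1.div (hasDerivAt_id x) (ne_of_gt hx0)
    have hFg : F =ᶠ[nhds x] (fun x => (1 - Real.exp (-x)) / x) := by
      filter_upwards [Ioi_mem_nhds hx0] with y hy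
      exact heq hy
    rw [hFg.deriv_eq, hd.deriv]
    apply div_neg_of_neg_of_pos _ (by positivity)
    have h := Real.add_one_lt_exp (x := x) (ne_of_gt hx0)
    have h2 : Real.exp (-x) * Real.exp x = 1 := by
      rw [← Real.exp_add]; simp
    nlinarith [Real.exp_pos (-x)]

theorem stmt_5 (lam φ φt : ℝ) (hlam : 0 < lam) (hφ : 0 ≤ φ) (hlt : φ < φt)
    (a : ℝ) (ha : a ∈ Set.Ioo (0:ℝ) 1) :
    Real.exp (-(lam * φ * F φ)) - Real.exp (-(lam * φt * F φt))
      < Real.exp (-(lam * φ * F (a * φt + (1 - a) * φ)))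
        - Real.exp (-(lam * φt * F (a * φt + (1 - a) * φ))) := by
  obtain ⟨ha0, ha1⟩ := ha
  set m := a * φt + (1 - a) * φ with hm
  have hφm : φ < m := by nlinarith
  have hmφt : m < φt := by nlinarith
  have hm0 : 0 < m := lt_of_le_of_lt hφ hφm
  have hφt0 : 0 < φt := lt_trans hm0 hmφt
  -- F m ≤ F φ
  have hFm_le : F m ≤ F φ := by
    rcases eq_or_lt_of_le hφ with h0 | h0
    · have : F φ = 1 := by simp [F, ← h0]
      rw [this]; exact le_of_lt (F_lt_one hm0)
    · exact le_of_lt (F_anti h0 hm0 hφm)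
  have hFφt_lt : F φt < F m := F_anti hm0 (lt_trans hm0 hmφt) hmφt
  have h1 : Real.exp (-(lam * φ * F φ)) ≤ Real.exp (-(lam * φ * F m)) := by
    apply Real.exp_le_exp.mpr
    have : lam * φ * F m ≤ lam * φ * F φ :=
      mul_le_mul_of_nonneg_left hFm_le (by positivity)
    linarith
  have h2 : Real.exp (-(lam * φt * F m)) < Real.exp (-(lam * φt * F φt)) := by
    apply Real.exp_lt_exp.mpr
    have : lam * φt * F φt < lam * φt * F m :=
      mul_lt_mul_of_pos_left hFφt_lt (by positivity)
    linarith
  linarith
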